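/- Let 𝒢 = (G_n,‖·‖_n)_{n∈ℕ} be a family of metric groups with sup_n sup_{g∈G_n} ‖g‖_n < ∞, and 𝒰 a nonprincipal ultrafilter on ℕ. Then the metric ultraproduct 𝒢*_met is a simple group if and only if 𝒢*_met is boundedly simple, i.e., for every g ∈ 𝒢*_met with g ≠ e there is N ∈ ℕ such that C_N(g,𝒢*_met) = 𝒢*_met. -/

import Mathlib

open Filter Set Pointwise ENNReal

/-- `CN N g` : the set of all products of at most `N` conjugates of `g` and `g⁻¹`. -/
def CN {H : Type*} [Group H] (N : ℕ) (g : H) : Set H :=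
  ⋃ m ≤ N, ({x | IsConj g x} ∪ {x | IsConj g⁻¹ x}) ^ m

/-- A family of groups equipped with conjugation-invariant pseudo-norms with values in `[0,∞]`. -/
structure PMFamily where
  G : ℕ → Type
  grp : ∀ n, Group (G n)
  ν : ∀ n, G n → ℝ≥0∞
  norm_one : ∀ n, ν n 1 = 0
  norm_mul : ∀ n (g h : G n), ν n (g * h) ≤ ν n g + ν n h
  norm_inv : ∀ n (g : G n), ν n g⁻¹ = ν n g
  norm_conj : ∀ n (g h : G n), ν n (h * g * h⁻¹) = ν n g

attribute [instance] PMFamily.grp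

namespace PMFamily

variable (𝒢 : PMFamily) (U : Ultrafilter ℕ)

/-- The subgroup of infinitesimal sequences. -/
def E : Subgroup (∀ n, 𝒢.G n) where
  carrier := {g | ∀ ε : ℝ≥0∞, 0 < ε → {n | 𝒢.ν n (g n) < ε} ∈ U}
  one_mem' := by
    intro ε hε
    have h : {n | 𝒢.ν n ((1 : ∀ n, 𝒢.G n) n) < ε} = Set.univ := by
      ext n; simpa [𝒢.norm_one n] using hε
    show {n | 𝒢.ν n ((1 : ∀ n, 𝒢.G n) n) < ε} ∈ U
    rw [h]
    exact Filter.univ_mem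
  mul_mem' := by
    intro g h hg hh ε hε
    have h2 : (0 : ℝ≥0∞) < ε / 2 := ENNReal.half_pos hε.ne'
    have key : {n | 𝒢.ν n (g n) < ε / 2} ∩ {n | 𝒢.ν n (h n) < ε / 2} ⊆
        {n | 𝒢.ν n ((g * h) n) < ε} := by
      rintro n ⟨h1, h1'⟩
      simp only [Set.mem_setOf_eq] at h1 h1' ⊢
      calc 𝒢.ν n ((g * h) n) = 𝒢.ν n (g n * h n) := rfl
        _ ≤ 𝒢.ν n (g n) + 𝒢.ν n (h n) := 𝒢.norm_mul n _ _
        _ < ε / 2 + ε / 2 := ENNReal.add_lt_add h1 h1'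
        _ = ε := ENNReal.add_halves ε
    exact Filter.mem_of_superset (Filter.inter_mem (hg _ h2) (hh _ h2)) key
  inv_mem' := by
    intro g hg ε hε
    have h : {n | 𝒢.ν n (g⁻¹ n) < ε} = {n | 𝒢.ν n (g n) < ε} := by
      ext n; simp only [Set.mem_setOf_eq, Pi.inv_apply, 𝒢.norm_inv n]
    show {n | 𝒢.ν n (g⁻¹ n) < ε} ∈ U
    rw [h]
    exact hg ε hε

theorem mem_E {g : ∀ n, 𝒢.G n} :
    g ∈ 𝒢.E U ↔ ∀ ε : ℝ≥0∞, 0 < ε → {n | 𝒢.ν n (g n) < ε} ∈ U := Iff.rfl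

instance normal_E : (𝒢.E U).Normal := by
  constructor
  intro g hg h
  rw [mem_E] at hg ⊢
  intro ε hε
  have heq : {n | 𝒢.ν n ((h * g * h⁻¹) n) < ε} = {n | 𝒢.ν n (g n) < ε} := by
    ext n
    simp only [Set.mem_setOf_eq, Pi.mul_apply, Pi.inv_apply, 𝒢.norm_conj n]
  rw [heq]
  exact hg ε hε

/-- The metric ultraproduct. -/
abbrev Q := (∀ n, 𝒢.G n) ⧸ 𝒢.E U

/-- The limit of the norms along the ultrafilter, on the product group. -/
noncomputable def pnorm (g : ∀ n, 𝒢.G n) : ℝ≥0∞ :=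
  Filter.limsup (fun n => 𝒢.ν n (g n)) U

/-- The induced norm on the metric ultraproduct. -/
noncomputable def qnorm (x : 𝒢.Q U) : ℝ≥0∞ := 𝒢.pnorm U (Quotient.out x)

/-- The open ball of radius `ε` around the identity in the metric ultraproduct. -/
def ball (ε : ℝ≥0∞) : Set (𝒢.Q U) := {x | 𝒢.qnorm U x < ε}

/-- Metrically internal subsets of the metric ultraproduct. -/
def internalSet (Xn : ∀ n, Set (𝒢.G n)) : Set (𝒢.Q U) :=
  (QuotientGroup.mk : (∀ n, 𝒢.G n) → 𝒢.Q U) '' {g | ∀ n, g n ∈ Xn n}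

/-- The finitary subgroup of the metric ultraproduct: classes of uniformly bounded
sequences (equivalently, elements of finite norm). -/
def finSubgroup : Subgroup (𝒢.Q U) where
  carrier := {x | ∃ g : ∀ n, 𝒢.G n, QuotientGroup.mk g = x ∧
    ∃ C : ℝ≥0∞, C ≠ ⊤ ∧ ∀ n, 𝒢.ν n (g n) ≤ C}
  one_mem' := ⟨1, rfl, 0, by simp, fun n => by simp [𝒢.norm_one n]⟩
  mul_mem' := by
    rintro x y ⟨g, rfl, C, hC, hg⟩ ⟨h, rfl, D, hD, hh⟩
    refine ⟨g * h, rfl, C + D, ENNReal.add_ne_top.mpr ⟨hC, hD⟩, fun n => ?_⟩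
    exact le_trans (𝒢.norm_mul n (g n) (h n)) (add_le_add (hg n) (hh n))
  inv_mem' := by
    rintro x ⟨g, rfl, C, hC, hg⟩
    exact ⟨g⁻¹, rfl, C, hC, fun n => by rw [Pi.inv_apply, 𝒢.norm_inv n]; exact hg n⟩

end PMFamily
namespace S7
open PMFamily

variable {H : Type*} [Group H]

/-- The union of the conjugacy classes of `g` and `g⁻¹`. -/
def Scl (g : H) : Set H := {x | IsConj g x} ∪ {x | IsConj g⁻¹ x}

lemma CN_eq (N : ℕ) (g : H) : CN N g = ⋃ m ≤ N, Scl g ^ m := rfl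

lemma mem_CN {N : ℕ} {g y : H} : y ∈ CN N g ↔ ∃ m ≤ N, y ∈ Scl g ^ m := by
  simp [CN_eq, Set.mem_iUnion]

lemma isConj_inv_of {a b : H} (h : IsConj a b) : IsConj a⁻¹ b⁻¹ := by
  rcases isConj_iff.1 h with ⟨c, rfl⟩
  exact isConj_iff.2 ⟨c, by group⟩

lemma Scl_inv {g y : H} (h : y ∈ Scl g) : y⁻¹ ∈ Scl g := by
  rcases h with h | h
  · exact Or.inr (isConj_inv_of h)
  · exact Or.inl (by simpa using isConj_inv_of h)

lemma Scl_conj {g y : H} (h : y ∈ Scl g) (c : H) : c * y * c⁻¹ ∈ Scl g := by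
  rcases h with h | h
  · exact Or.inl (h.trans (isConj_iff.2 ⟨c, rfl⟩))
  · exact Or.inr (h.trans (isConj_iff.2 ⟨c, rfl⟩))

lemma Scl_pow_inv {g y : H} {m : ℕ} (h : y ∈ Scl g ^ m) : y⁻¹ ∈ Scl g ^ m := by
  induction m generalizing y with
  | zero => simp_all
  | succ m ih =>
    rw [pow_succ] at h
    rcases h with ⟨a, ha, b, hb, rfl⟩
    rw [pow_succ']
    exact ⟨b⁻¹, Scl_inv hb, a⁻¹, ih ha, (mul_inv_rev a b).symm⟩

lemma Scl_pow_conj {g y : H} {m : ℕ} (h : y ∈ Scl g ^ m) (c : H) :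
    c * y * c⁻¹ ∈ Scl g ^ m := by
  induction m generalizing y with
  | zero => simp_all
  | succ m ih =>
    rw [pow_succ] at h ⊢
    rcases h with ⟨a, ha, b, hb, rfl⟩
    exact ⟨c * a * c⁻¹, ih ha, c * b * c⁻¹, Scl_conj hb c, by group⟩

lemma CN_one (N : ℕ) (g : H) : (1 : H) ∈ CN N g :=
  mem_CN.2 ⟨0, Nat.zero_le _, by simp⟩

lemma CN_self {N : ℕ} (hN : 1 ≤ N) (g : H) : g ∈ CN N g :=
  mem_CN.2 ⟨1, hN, by simpa [Scl] using Or.inl (IsConj.refl g)⟩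

lemma CN_mono {M N : ℕ} (h : M ≤ N) (g : H) : CN M g ⊆ CN N g := by
  intro y hy
  rcases mem_CN.1 hy with ⟨m, hm, hy⟩
  exact mem_CN.2 ⟨m, hm.trans h, hy⟩

lemma CN_inv {N : ℕ} {g y : H} (h : y ∈ CN N g) : y⁻¹ ∈ CN N g := by
  rcases mem_CN.1 h with ⟨m, hm, hy⟩
  exact mem_CN.2 ⟨m, hm, Scl_pow_inv hy⟩

lemma CN_mul {M N : ℕ} {g y z : H} (hy : y ∈ CN M g) (hz : z ∈ CN N g) :
    y * z ∈ CN (M + N) g := by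
  rcases mem_CN.1 hy with ⟨m, hm, hy⟩
  rcases mem_CN.1 hz with ⟨k, hk, hz⟩
  exact mem_CN.2 ⟨m + k, Nat.add_le_add hm hk, by rw [pow_add]; exact ⟨y, hy, z, hz, rfl⟩⟩

lemma CN_conj {N : ℕ} {g y : H} (h : y ∈ CN N g) (c : H) : c * y * c⁻¹ ∈ CN N g := by
  rcases mem_CN.1 h with ⟨m, hm, hy⟩
  exact mem_CN.2 ⟨m, hm, Scl_pow_conj hy c⟩

lemma Scl_pow_subset {K : Subgroup H} [K.Normal] {g : H} (hg : g ∈ K) (m : ℕ) :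
    Scl g ^ m ⊆ (K : Set H) := by
  induction m with
  | zero =>
    intro x hx
    rw [pow_zero, Set.mem_one] at hx
    subst hx; exact K.one_mem
  | succ m ih =>
    rw [pow_succ]
    rintro _ ⟨a, ha, b, hb, rfl⟩
    refine K.mul_mem (ih ha) ?_
    rcases hb with hb | hb
    · rcases isConj_iff.1 hb with ⟨c, rfl⟩
      exact Subgroup.Normal.conj_mem ‹K.Normal› g hg c
    · rcases isConj_iff.1 hb with ⟨c, rfl⟩
      exact Subgroup.Normal.conj_mem ‹K.Normal› g⁻¹ (K.inv_mem hg) c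

end S7

namespace S7
open PMFamily

variable (𝒢 : PMFamily) (U : Ultrafilter ℕ)

lemma pnorm_le_of_eventually {g : ∀ n, 𝒢.G n} {a : ℝ≥0∞}
    (h : {n | 𝒢.ν n (g n) ≤ a} ∈ U) : 𝒢.pnorm U g ≤ a :=
  Filter.limsup_le_of_le (by isBoundedDefault) h

lemma le_pnorm_of_mem {g : ∀ n, 𝒢.G n} {a : ℝ≥0∞}
    (h : {n | a ≤ 𝒢.ν n (g n)} ∈ U) : a ≤ 𝒢.pnorm U g :=
  Filter.le_limsup_of_frequently_le ((Filter.eventually_iff.2 h).frequently)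

lemma pnorm_lt_mem {g : ∀ n, 𝒢.G n} {a : ℝ≥0∞}
    (h : 𝒢.pnorm U g < a) : {n | 𝒢.ν n (g n) < a} ∈ U := by
  by_contra hc
  have h2 : {n | 𝒢.ν n (g n) < a}ᶜ ∈ U := Ultrafilter.compl_mem_iff_notMem.2 hc
  have h3 : {n | a ≤ 𝒢.ν n (g n)} ∈ U := by
    refine Filter.mem_of_superset h2 ?_
    intro n hn
    simpa using not_lt.1 (by simpa using hn)
  exact absurd (le_pnorm_of_mem 𝒢 U h3) (not_le.2 h)

lemma pnorm_one : 𝒢.pnorm U 1 = 0 := by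
  refine le_antisymm (pnorm_le_of_eventually 𝒢 U ?_) zero_le
  have : {n | 𝒢.ν n ((1 : ∀ n, 𝒢.G n) n) ≤ 0} = Set.univ := by
    ext n; simp [𝒢.norm_one n]
  rw [this]; exact Filter.univ_mem

lemma pnorm_mul_le (g h : ∀ n, 𝒢.G n) :
    𝒢.pnorm U (g * h) ≤ 𝒢.pnorm U g + 𝒢.pnorm U h := by
  refine ENNReal.le_of_forall_pos_le_add fun ε hε htop => ?_
  have hne : ((ε : ℝ≥0∞) / 2) ≠ 0 :=
    (ENNReal.half_pos (by exact_mod_cast hε.ne' : (ε : ℝ≥0∞) ≠ 0)).ne'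
  have hg : 𝒢.pnorm U g < 𝒢.pnorm U g + ε / 2 :=
    ENNReal.lt_add_right (ne_top_of_le_ne_top htop.ne le_self_add)
      hne
  have hh : 𝒢.pnorm U h < 𝒢.pnorm U h + ε / 2 :=
    ENNReal.lt_add_right (ne_top_of_le_ne_top htop.ne le_add_self)
      hne
  refine pnorm_le_of_eventually 𝒢 U ?_
  refine Filter.mem_of_superset
    (Filter.inter_mem (pnorm_lt_mem 𝒢 U hg) (pnorm_lt_mem 𝒢 U hh)) ?_
  rintro n ⟨h1, h2⟩
  simp only [Set.mem_setOf_eq] at h1 h2 ⊢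
  calc 𝒢.ν n ((g * h) n) ≤ 𝒢.ν n (g n) + 𝒢.ν n (h n) := 𝒢.norm_mul n _ _
    _ ≤ (𝒢.pnorm U g + ε / 2) + (𝒢.pnorm U h + ε / 2) := add_le_add h1.le h2.le
    _ = 𝒢.pnorm U g + 𝒢.pnorm U h + (ε / 2 + ε / 2) := by ring
    _ = 𝒢.pnorm U g + 𝒢.pnorm U h + ε := by rw [ENNReal.add_halves]

lemma pnorm_inv (g : ∀ n, 𝒢.G n) : 𝒢.pnorm U g⁻¹ = 𝒢.pnorm U g := by
  unfold PMFamily.pnorm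
  congr 1
  funext n
  rw [Pi.inv_apply, 𝒢.norm_inv n]

lemma pnorm_eq_zero_iff {g : ∀ n, 𝒢.G n} : 𝒢.pnorm U g = 0 ↔ g ∈ 𝒢.E U := by
  constructor
  · intro h ε hε
    exact pnorm_lt_mem 𝒢 U (show 𝒢.pnorm U g < ε by rw [h]; exact hε)
  · intro h
    refine le_antisymm ?_ zero_le
    refine ENNReal.le_of_forall_pos_le_add fun ε hε _ => ?_
    rw [zero_add]
    refine pnorm_le_of_eventually 𝒢 U (Filter.mem_of_superset ((𝒢.mem_E U).1 h ε (by exact_mod_cast hε)) ?_)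
    intro n hn
    simp only [Set.mem_setOf_eq] at hn ⊢
    exact hn.le

lemma pnorm_mul_E_left {g e : ∀ n, 𝒢.G n} (he : e ∈ 𝒢.E U) :
    𝒢.pnorm U (e * g) = 𝒢.pnorm U g := by
  have h0 : 𝒢.pnorm U e = 0 := (pnorm_eq_zero_iff 𝒢 U).2 he
  have h0' : 𝒢.pnorm U e⁻¹ = 0 := by rw [pnorm_inv]; exact h0
  refine le_antisymm ?_ ?_
  · calc 𝒢.pnorm U (e * g) ≤ 𝒢.pnorm U e + 𝒢.pnorm U g := pnorm_mul_le 𝒢 U e g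
      _ = 𝒢.pnorm U g := by rw [h0, zero_add]
  · calc 𝒢.pnorm U g = 𝒢.pnorm U (e⁻¹ * (e * g)) := by group
      _ ≤ 𝒢.pnorm U e⁻¹ + 𝒢.pnorm U (e * g) := pnorm_mul_le 𝒢 U _ _
      _ = 𝒢.pnorm U (e * g) := by rw [h0', zero_add]

lemma mk_out (x : 𝒢.Q U) :
    (QuotientGroup.mk (Quotient.out x) : 𝒢.Q U) = x := Quotient.out_eq x

lemma qnorm_mk (h : ∀ n, 𝒢.G n) :
    𝒢.qnorm U (QuotientGroup.mk h) = 𝒢.pnorm U h := by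
  set k := Quotient.out (QuotientGroup.mk h : 𝒢.Q U) with hk
  have hkk : (QuotientGroup.mk k : 𝒢.Q U) = QuotientGroup.mk h := mk_out 𝒢 U _
  have hmem : k⁻¹ * h ∈ 𝒢.E U := QuotientGroup.eq.1 hkk
  have : h = k * (k⁻¹ * h) := by group
  show 𝒢.pnorm U k = 𝒢.pnorm U h
  conv_rhs => rw [this]
  have hmem' : k * (k⁻¹ * h) * k⁻¹ ∈ 𝒢.E U := by
    have := (𝒢.normal_E U).conj_mem _ hmem k
    simpa using this
  calc 𝒢.pnorm U k = 𝒢.pnorm U ((k * (k⁻¹ * h) * k⁻¹)⁻¹ * (k * (k⁻¹ * h))) := by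
        congr 1; group
    _ = 𝒢.pnorm U (k * (k⁻¹ * h)) := by
        refine pnorm_mul_E_left 𝒢 U ((𝒢.E U).inv_mem hmem')
    _ = 𝒢.pnorm U (k * (k⁻¹ * h)) := rfl

end S7

namespace S7
open PMFamily

variable (𝒢 : PMFamily) (U : Ultrafilter ℕ)

lemma qnorm_mul_le (x y : 𝒢.Q U) :
    𝒢.qnorm U (x * y) ≤ 𝒢.qnorm U x + 𝒢.qnorm U y := by
  refine QuotientGroup.induction_on x fun a => ?_
  refine QuotientGroup.induction_on y fun b => ?_
  rw [show ((QuotientGroup.mk a : 𝒢.Q U) * QuotientGroup.mk b) = QuotientGroup.mk (a * b) from rfl,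
    qnorm_mk, qnorm_mk, qnorm_mk]
  exact pnorm_mul_le 𝒢 U a b

lemma qnorm_inv (x : 𝒢.Q U) : 𝒢.qnorm U x⁻¹ = 𝒢.qnorm U x := by
  refine QuotientGroup.induction_on x fun a => ?_
  rw [show ((QuotientGroup.mk a : 𝒢.Q U)⁻¹) = QuotientGroup.mk a⁻¹ from rfl, qnorm_mk, qnorm_mk]
  exact pnorm_inv 𝒢 U a

lemma qnorm_one : 𝒢.qnorm U 1 = 0 := by
  rw [show (1 : 𝒢.Q U) = QuotientGroup.mk 1 from rfl, qnorm_mk]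
  exact pnorm_one 𝒢 U

lemma qnorm_eq_zero_iff {x : 𝒢.Q U} : 𝒢.qnorm U x = 0 ↔ x = 1 := by
  refine QuotientGroup.induction_on x fun a => ?_
  rw [qnorm_mk, pnorm_eq_zero_iff]
  exact (QuotientGroup.eq_one_iff a).symm

lemma mk_eq_mk_of_agree {a b : ∀ n, 𝒢.G n} (h : {n | a n = b n} ∈ U) :
    (QuotientGroup.mk a : 𝒢.Q U) = QuotientGroup.mk b := by
  refine QuotientGroup.eq.2 ?_
  intro ε hε
  refine Filter.mem_of_superset h ?_
  intro n hn
  have : a n = b n := hn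
  simp only [Set.mem_setOf_eq, Pi.mul_apply, Pi.inv_apply, this, inv_mul_cancel]
  rw [𝒢.norm_one n]
  exact hε

lemma tail_mem {U : Ultrafilter ℕ} (hU : (U : Filter ℕ) ≤ Filter.cofinite) (k : ℕ) :
    {n | k ≤ n} ∈ U := by
  refine hU ?_
  rw [Filter.mem_cofinite]
  have : {n : ℕ | k ≤ n}ᶜ = {n | n < k} := by ext n; simp [not_le]
  rw [this]
  exact Set.finite_lt_nat k

lemma inv_succ_lt_mem {U : Ultrafilter ℕ} (hU : (U : Filter ℕ) ≤ Filter.cofinite)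
    {ε : ℝ≥0∞} (hε : 0 < ε) : {n : ℕ | ((n : ℝ≥0∞) + 1)⁻¹ < ε} ∈ U := by
  obtain ⟨m, hm⟩ := ENNReal.exists_inv_nat_lt hε.ne'
  refine Filter.mem_of_superset (tail_mem hU m) ?_
  intro n hn
  have hn' : (m : ℕ) ≤ n := hn
  have hle : ((m : ℝ≥0∞)) ≤ (n : ℝ≥0∞) + 1 := by
    calc (m : ℝ≥0∞) ≤ (n : ℝ≥0∞) := by exact_mod_cast hn'
      _ ≤ (n : ℝ≥0∞) + 1 := le_self_add
  calc ((n : ℝ≥0∞) + 1)⁻¹ ≤ (m : ℝ≥0∞)⁻¹ := ENNReal.inv_le_inv' hle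
    _ < ε := hm

end S7

namespace S7
open PMFamily

variable (𝒢 : PMFamily) (U : Ultrafilter ℕ)

lemma mk_conj_of_isConj {g : ∀ n, 𝒢.G n} {b : 𝒢.Q U}
    (hb : IsConj (QuotientGroup.mk g : 𝒢.Q U) b) :
    ∃ w : ∀ n, 𝒢.G n, QuotientGroup.mk w = b ∧ ∀ n, IsConj (g n) (w n) := by
  rcases isConj_iff.1 hb with ⟨c, hc⟩
  set cc := Quotient.out c with hcc
  refine ⟨cc * g * cc⁻¹, ?_, fun n => isConj_iff.2 ⟨cc n, rfl⟩⟩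
  have h1 : (QuotientGroup.mk (cc * g * cc⁻¹) : 𝒢.Q U)
      = QuotientGroup.mk cc * QuotientGroup.mk g * (QuotientGroup.mk cc)⁻¹ := rfl
  rw [h1, mk_out]
  exact hc

lemma pow_transfer_down {g : ∀ n, 𝒢.G n} {m : ℕ} {y : 𝒢.Q U}
    (hy : y ∈ Scl (QuotientGroup.mk g : 𝒢.Q U) ^ m) :
    ∃ k : ∀ n, 𝒢.G n, QuotientGroup.mk k = y ∧ ∀ n, k n ∈ Scl (g n) ^ m := by
  induction m generalizing y with
  | zero =>
    rw [pow_zero, Set.mem_one] at hy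
    exact ⟨1, by rw [hy]; rfl, fun n => by rw [pow_zero]; exact Set.mem_one.2 rfl⟩
  | succ m ih =>
    rw [pow_succ] at hy
    rcases hy with ⟨a, ha, b, hb, rfl⟩
    obtain ⟨ka, hka, hka'⟩ := ih ha
    have hw : ∃ w : ∀ n, 𝒢.G n, QuotientGroup.mk w = b ∧ ∀ n, w n ∈ Scl (g n) := by
      rcases hb with hb | hb
      · obtain ⟨w, hw1, hw2⟩ := mk_conj_of_isConj 𝒢 U hb
        exact ⟨w, hw1, fun n => Or.inl (hw2 n)⟩
      · have hb' : IsConj (QuotientGroup.mk g⁻¹ : 𝒢.Q U) b := hb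
        obtain ⟨w, hw1, hw2⟩ := mk_conj_of_isConj 𝒢 U hb'
        exact ⟨w, hw1, fun n => Or.inr (hw2 n)⟩
    obtain ⟨w, hw1, hw2⟩ := hw
    refine ⟨ka * w, ?_, fun n => ?_⟩
    · rw [show (QuotientGroup.mk (ka * w) : 𝒢.Q U)
          = QuotientGroup.mk ka * QuotientGroup.mk w from rfl, hka, hw1]
    · rw [pow_succ]
      exact ⟨ka n, hka' n, w n, hw2 n, rfl⟩

lemma scl_transfer_up {g b : ∀ n, 𝒢.G n}
    (hb : {n | b n ∈ Scl (g n)} ∈ U) :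
    (QuotientGroup.mk b : 𝒢.Q U) ∈ Scl (QuotientGroup.mk g : 𝒢.Q U) := by
  have hsplit : {n | IsConj (g n) (b n)} ∈ U ∨ {n | IsConj ((g n)⁻¹) (b n)} ∈ U := by
    have : {n | IsConj (g n) (b n)} ∪ {n | IsConj ((g n)⁻¹) (b n)} ∈ U :=
      Filter.mem_of_superset hb (fun n hn => hn)
    exact Ultrafilter.union_mem_iff.1 this
  have key : ∀ (g' : ∀ n, 𝒢.G n), {n | IsConj (g' n) (b n)} ∈ U →
      IsConj (QuotientGroup.mk g' : 𝒢.Q U) (QuotientGroup.mk b) := by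
    intro g' hB
    have hch : ∀ n, ∃ c : 𝒢.G n, IsConj (g' n) (b n) → c * g' n * c⁻¹ = b n := by
      intro n
      by_cases h : IsConj (g' n) (b n)
      · rcases isConj_iff.1 h with ⟨c, hc⟩
        exact ⟨c, fun _ => hc⟩
      · exact ⟨1, fun hh => absurd hh h⟩
    choose c hc using hch
    have hagree : {n | (c * g' * c⁻¹ : ∀ n, 𝒢.G n) n = b n} ∈ U :=
      Filter.mem_of_superset hB (fun n hn => hc n hn)
    have : (QuotientGroup.mk (c * g' * c⁻¹) : 𝒢.Q U) = QuotientGroup.mk b :=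
      mk_eq_mk_of_agree 𝒢 U hagree
    refine isConj_iff.2 ⟨QuotientGroup.mk c, ?_⟩
    rw [← this]; rfl
  rcases hsplit with hB | hB
  · exact Or.inl (key g hB)
  · refine Or.inr ?_
    have := key g⁻¹ (by simpa using hB)
    simpa using this

lemma pow_transfer_up {g : ∀ n, 𝒢.G n} {m : ℕ} {k : ∀ n, 𝒢.G n}
    (hk : {n | k n ∈ Scl (g n) ^ m} ∈ U) :
    (QuotientGroup.mk k : 𝒢.Q U) ∈ Scl (QuotientGroup.mk g : 𝒢.Q U) ^ m := by
  induction m generalizing k with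
  | zero =>
    rw [pow_zero, Set.mem_one]
    have h1 : {n | k n = 1} ∈ U := by
      refine Filter.mem_of_superset hk ?_
      intro n hn
      have : k n ∈ Scl (g n) ^ 0 := hn
      rwa [pow_zero, Set.mem_one] at this
    have : (QuotientGroup.mk k : 𝒢.Q U) = QuotientGroup.mk 1 :=
      mk_eq_mk_of_agree 𝒢 U (by simpa using h1)
    rw [this]; rfl
  | succ m ih =>
    have hdec : ∀ n, ∃ x y : 𝒢.G n, k n ∈ Scl (g n) ^ m * Scl (g n) →
        x ∈ Scl (g n) ^ m ∧ y ∈ Scl (g n) ∧ x * y = k n := by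
      intro n
      by_cases h : k n ∈ Scl (g n) ^ m * Scl (g n)
      · rcases h with ⟨x, hx, y, hy, hxy⟩
        exact ⟨x, y, fun _ => ⟨hx, hy, hxy⟩⟩
      · exact ⟨1, 1, fun hh => absurd hh h⟩
    choose a b hab using hdec
    have hA : {n | k n ∈ Scl (g n) ^ m * Scl (g n)} ∈ U := by
      refine Filter.mem_of_superset hk ?_
      intro n hn
      have : k n ∈ Scl (g n) ^ (m + 1) := hn
      rwa [pow_succ] at this
    have ha : {n | a n ∈ Scl (g n) ^ m} ∈ U :=
      Filter.mem_of_superset hA (fun n hn => (hab n hn).1)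
    have hb : {n | b n ∈ Scl (g n)} ∈ U :=
      Filter.mem_of_superset hA (fun n hn => (hab n hn).2.1)
    have hagree : {n | (a * b : ∀ n, 𝒢.G n) n = k n} ∈ U :=
      Filter.mem_of_superset hA (fun n hn => (hab n hn).2.2)
    have hmk : (QuotientGroup.mk k : 𝒢.Q U) = QuotientGroup.mk a * QuotientGroup.mk b := by
      rw [show ((QuotientGroup.mk a : 𝒢.Q U) * QuotientGroup.mk b)
          = QuotientGroup.mk (a * b) from rfl]
      exact (mk_eq_mk_of_agree 𝒢 U hagree).symm
    rw [hmk, pow_succ]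
    exact ⟨QuotientGroup.mk a, ih ha, QuotientGroup.mk b, scl_transfer_up 𝒢 U hb, rfl⟩

lemma CN_transfer_down {g : ∀ n, 𝒢.G n} {N : ℕ} {y : 𝒢.Q U}
    (hy : y ∈ CN N (QuotientGroup.mk g : 𝒢.Q U)) :
    ∃ k : ∀ n, 𝒢.G n, QuotientGroup.mk k = y ∧ ∀ n, k n ∈ CN N (g n) := by
  rcases mem_CN.1 hy with ⟨m, hm, hy⟩
  obtain ⟨k, hk1, hk2⟩ := pow_transfer_down 𝒢 U hy
  exact ⟨k, hk1, fun n => mem_CN.2 ⟨m, hm, hk2 n⟩⟩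

lemma CN_transfer_up {g : ∀ n, 𝒢.G n} {N : ℕ} {k : ∀ n, 𝒢.G n}
    (hk : {n | k n ∈ CN N (g n)} ∈ U) :
    (QuotientGroup.mk k : 𝒢.Q U) ∈ CN N (QuotientGroup.mk g : 𝒢.Q U) := by
  have hunion : (⋃ m ∈ Finset.range (N + 1), {n | k n ∈ Scl (g n) ^ m}) ∈ U := by
    refine Filter.mem_of_superset hk ?_
    intro n hn
    rcases mem_CN.1 hn with ⟨m, hm, hmem⟩
    exact Set.mem_biUnion (Finset.mem_range.2 (Nat.lt_succ_of_le hm)) hmem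
  obtain ⟨m, hmr, hmem⟩ := (Ultrafilter.finite_biUnion_mem_iff (Finset.range (N + 1)).finite_toSet).1 hunion
  exact mem_CN.2 ⟨m, Nat.lt_succ_iff.1 (Finset.mem_range.1 hmr), pow_transfer_up 𝒢 U hmem⟩

end S7

namespace S7
open PMFamily

variable (𝒢 : PMFamily) (U : Ultrafilter ℕ)

/-- Pointwise distance of `h n` to `CN N (g n)`. -/
noncomputable def finf (𝒢 : PMFamily) (g h : ∀ n, 𝒢.G n) (N : ℕ) (n : ℕ) : ℝ≥0∞ :=
  ⨅ d ∈ CN N (g n), 𝒢.ν n (d⁻¹ * h n)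

lemma approx_choice (g h : ∀ n, 𝒢.G n) (N : ℕ) :
    ∃ d : ∀ n, 𝒢.G n, (∀ n, d n ∈ CN N (g n)) ∧
      ∀ n, 𝒢.ν n ((d n)⁻¹ * h n) ≤ finf 𝒢 g h N n + ((n : ℝ≥0∞) + 1)⁻¹ := by
  have : ∀ n, ∃ d : 𝒢.G n, d ∈ CN N (g n) ∧
      𝒢.ν n (d⁻¹ * h n) ≤ finf 𝒢 g h N n + ((n : ℝ≥0∞) + 1)⁻¹ := by
    intro n
    by_cases htop : finf 𝒢 g h N n = ⊤
    · exact ⟨1, CN_one N (g n), by rw [htop]; simp⟩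
    · have hlt : finf 𝒢 g h N n < finf 𝒢 g h N n + ((n : ℝ≥0∞) + 1)⁻¹ :=
        ENNReal.lt_add_right htop (ENNReal.inv_ne_zero.2 (by simp))
      rw [finf] at hlt
      obtain ⟨d, hd⟩ := iInf_lt_iff.1 hlt
      obtain ⟨hdmem, hd2⟩ := iInf_lt_iff.1 hd
      exact ⟨d, hdmem, hd2.le⟩
  choose d hd1 hd2 using this
  exact ⟨d, hd1, hd2⟩

lemma finf_le {g h k : ∀ n, 𝒢.G n} {N : ℕ} {n : ℕ} (hk : k n ∈ CN N (g n)) :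
    finf 𝒢 g h N n ≤ 𝒢.ν n ((k n)⁻¹ * h n) :=
  biInf_le _ hk

lemma pnorm_le_of_inf {U : Ultrafilter ℕ} (hU : (U : Filter ℕ) ≤ Filter.cofinite)
    {h d : ∀ n, 𝒢.G n} {f : ℕ → ℝ≥0∞} {δ : ℝ≥0∞}
    (hd : ∀ n, 𝒢.ν n ((d n)⁻¹ * h n) ≤ f n + ((n : ℝ≥0∞) + 1)⁻¹)
    (hf : {n | f n < δ} ∈ U) : 𝒢.pnorm U (h⁻¹ * d) ≤ δ := by
  refine ENNReal.le_of_forall_pos_le_add fun γ hγ _ => ?_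
  have hγ' : (0 : ℝ≥0∞) < γ := by exact_mod_cast hγ
  refine pnorm_le_of_eventually 𝒢 U ?_
  refine Filter.mem_of_superset (Filter.inter_mem hf (inv_succ_lt_mem hU hγ')) ?_
  rintro n ⟨h1, h2⟩
  simp only [Set.mem_setOf_eq] at h1 h2 ⊢
  have hval : 𝒢.ν n ((h⁻¹ * d) n) = 𝒢.ν n ((d n)⁻¹ * h n) := by
    rw [show (h⁻¹ * d) n = (h n)⁻¹ * d n from rfl, ← 𝒢.norm_inv n]
    congr 1
    group
  rw [hval]
  calc 𝒢.ν n ((d n)⁻¹ * h n) ≤ f n + ((n : ℝ≥0∞) + 1)⁻¹ := hd n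
    _ ≤ δ + γ := add_le_add h1.le h2.le

lemma mem_CN_of_approx {U : Ultrafilter ℕ} (hU : (U : Filter ℕ) ≤ Filter.cofinite)
    (g : ∀ n, 𝒢.G n) (N : ℕ) (y : 𝒢.Q U)
    (happrox : ∀ δ : ℝ≥0∞, 0 < δ → ∃ z ∈ CN N (QuotientGroup.mk g : 𝒢.Q U),
      𝒢.qnorm U (y⁻¹ * z) < δ) :
    y ∈ CN N (QuotientGroup.mk g : 𝒢.Q U) := by
  set h := Quotient.out y with hh
  have hy : (QuotientGroup.mk h : 𝒢.Q U) = y := mk_out 𝒢 U y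
  obtain ⟨d, hd1, hd2⟩ := approx_choice 𝒢 g h N
  have step1 : ∀ δ : ℝ≥0∞, 0 < δ → {n | finf 𝒢 g h N n < δ} ∈ U := by
    intro δ hδ
    obtain ⟨z, hz, hlt⟩ := happrox δ hδ
    obtain ⟨k, hk1, hk2⟩ := CN_transfer_down 𝒢 U hz
    have hq : 𝒢.qnorm U (y⁻¹ * z) = 𝒢.pnorm U (h⁻¹ * k) := by
      rw [← hy, ← hk1]
      rw [show ((QuotientGroup.mk h : 𝒢.Q U)⁻¹ * QuotientGroup.mk k)
          = QuotientGroup.mk (h⁻¹ * k) from rfl, qnorm_mk]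
    rw [hq] at hlt
    refine Filter.mem_of_superset (pnorm_lt_mem 𝒢 U hlt) ?_
    intro n hn
    simp only [Set.mem_setOf_eq] at hn ⊢
    refine lt_of_le_of_lt (le_trans (finf_le 𝒢 (hk2 n)) (le_of_eq ?_)) hn
    rw [show (h⁻¹ * k) n = (h n)⁻¹ * k n from rfl, ← 𝒢.norm_inv n]
    congr 1
    group
  have hzero : 𝒢.pnorm U (h⁻¹ * d) = 0 := by
    refine le_antisymm ?_ zero_le
    refine ENNReal.le_of_forall_pos_le_add fun γ hγ _ => ?_
    rw [zero_add]
    exact pnorm_le_of_inf 𝒢 hU hd2 (step1 _ (by exact_mod_cast hγ))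
  have hmk : (QuotientGroup.mk h : 𝒢.Q U) = QuotientGroup.mk d :=
    QuotientGroup.eq.2 (by
      have := (pnorm_eq_zero_iff 𝒢 U).1 hzero
      exact this)
  rw [← hy, hmk]
  exact CN_transfer_up 𝒢 U (g := g) (by
    refine Filter.univ_mem' ?_
    intro n
    exact hd1 n)

lemma notin_CN_dist {U : Ultrafilter ℕ} (hU : (U : Filter ℕ) ≤ Filter.cofinite)
    (g h : ∀ n, 𝒢.G n) (N : ℕ) {ε : ℝ≥0∞} (hε0 : 0 < ε) (hεtop : ε ≠ ⊤)
    (hfar : ∀ z ∈ CN N (QuotientGroup.mk g : 𝒢.Q U),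
      ¬ 𝒢.qnorm U ((QuotientGroup.mk h : 𝒢.Q U)⁻¹ * z) < ε) :
    {n | ¬ finf 𝒢 g h N n < ε / 2} ∈ U := by
  by_contra hc
  have hcompl : {n | finf 𝒢 g h N n < ε / 2} ∈ U := by
    have := Ultrafilter.compl_mem_iff_notMem.2 hc
    refine Filter.mem_of_superset this ?_
    intro n hn
    simpa using hn
  obtain ⟨d, hd1, hd2⟩ := approx_choice 𝒢 g h N
  have hmem : (QuotientGroup.mk d : 𝒢.Q U) ∈ CN N (QuotientGroup.mk g : 𝒢.Q U) :=
    CN_transfer_up 𝒢 U (Filter.univ_mem' (fun n => hd1 n))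
  have hq : 𝒢.qnorm U ((QuotientGroup.mk h : 𝒢.Q U)⁻¹ * QuotientGroup.mk d)
      = 𝒢.pnorm U (h⁻¹ * d) := by
    rw [show ((QuotientGroup.mk h : 𝒢.Q U)⁻¹ * QuotientGroup.mk d)
        = QuotientGroup.mk (h⁻¹ * d) from rfl, qnorm_mk]
  have hle : 𝒢.pnorm U (h⁻¹ * d) ≤ ε / 2 :=
    pnorm_le_of_inf 𝒢 hU hd2 hcompl
  exact hfar _ hmem (by
    rw [hq]
    exact lt_of_le_of_lt hle (ENNReal.half_lt_self hε0.ne' hεtop))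

end S7

namespace S7
open PMFamily

variable (𝒢 : PMFamily) (U : Ultrafilter ℕ)

lemma half_pow_ne_zero (k : ℕ) : ((2 : ℝ≥0∞)⁻¹ ^ k) ≠ 0 :=
  pow_ne_zero k (ENNReal.inv_ne_zero.2 (by norm_num))

lemma half_pow_ne_top (k : ℕ) : ((2 : ℝ≥0∞)⁻¹ ^ k) ≠ ⊤ :=
  ENNReal.pow_ne_top (by
    rw [Ne, ENNReal.inv_eq_top]
    norm_num)

lemma lt_twice_self {a : ℝ≥0∞} (h0 : a ≠ 0) (htop : a ≠ ⊤) : a < a * 2 := by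
  rw [mul_two]
  exact ENNReal.lt_add_right htop h0

lemma complete {U : Ultrafilter ℕ} (hU : (U : Filter ℕ) ≤ Filter.cofinite)
    (x : ℕ → 𝒢.Q U) (hx : ∀ k, 𝒢.qnorm U ((x k)⁻¹ * x (k + 1)) ≤ 2⁻¹ ^ k) :
    ∃ y : 𝒢.Q U, ∀ k, 𝒢.qnorm U ((x k)⁻¹ * y) ≤ 2⁻¹ ^ k * 4 := by
  classical
  have hrep : ∀ k, ∃ h : ∀ n, 𝒢.G n, (QuotientGroup.mk h : 𝒢.Q U) = x k :=
    fun k => ⟨Quotient.out (x k), mk_out 𝒢 U (x k)⟩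
  choose h hh using hrep
  set S : ℕ → Set ℕ :=
    fun k => {n | 𝒢.ν n (((h k)⁻¹ * h (k + 1)) n) < 2⁻¹ ^ k * 2} with hS
  have hSU : ∀ k, S k ∈ U := by
    intro k
    have hq : 𝒢.pnorm U ((h k)⁻¹ * h (k + 1)) ≤ 2⁻¹ ^ k := by
      have := hx k
      rw [← hh k, ← hh (k + 1),
        show ((QuotientGroup.mk (h k) : 𝒢.Q U)⁻¹ * QuotientGroup.mk (h (k + 1)))
          = QuotientGroup.mk ((h k)⁻¹ * h (k + 1)) from rfl, qnorm_mk] at this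
      exact this
    exact pnorm_lt_mem 𝒢 U
      (lt_of_le_of_lt hq (lt_twice_self (half_pow_ne_zero k) (half_pow_ne_top k)))
  set T : ℕ → Set ℕ := fun k => {n | k ≤ n} ∩ ⋂ j ∈ Finset.range k, S j with hT
  have hTU : ∀ k, T k ∈ U := by
    intro k
    refine Filter.inter_mem (tail_mem hU k) ?_
    exact (Filter.biInter_mem (Finset.range k).finite_toSet).2 (fun j _ => hSU j)
  have hTmono : ∀ j k, j ≤ k → T k ⊆ T j := by
    intro j k hjk n hn
    obtain ⟨hn1, hn2⟩ := hn
    refine ⟨le_trans hjk hn1, ?_⟩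
    simp only [Set.mem_iInter] at hn2 ⊢
    intro i hi
    exact hn2 i (Finset.mem_range.2 (lt_of_lt_of_le (Finset.mem_range.1 hi) hjk))
  have hTS : ∀ k n, n ∈ T (k + 1) → n ∈ S k := by
    intro k n hn
    obtain ⟨_, hn2⟩ := hn
    simp only [Set.mem_iInter] at hn2
    exact hn2 k (Finset.mem_range.2 (Nat.lt_succ_self k))
  set m : ℕ → ℕ := fun n => Nat.findGreatest (fun k => n ∈ T k) n with hm
  set w : ∀ n, 𝒢.G n := fun n => h (m n) n with hw
  have key : ∀ k M, k ≤ M → ∀ n ∈ T M,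
      𝒢.ν n ((h k n)⁻¹ * h M n) + 2⁻¹ ^ M * 4 ≤ 2⁻¹ ^ k * 4 := by
    intro k
    refine Nat.le_induction ?_ ?_
    · intro n _
      simp [𝒢.norm_one n]
    · intro M hkM ih n hn
      have hnM : n ∈ T M := hTmono M (M + 1) (Nat.le_succ M) hn
      have hnS : n ∈ S M := hTS M n hn
      have htri : 𝒢.ν n ((h k n)⁻¹ * h (M + 1) n)
          ≤ 𝒢.ν n ((h k n)⁻¹ * h M n) + 𝒢.ν n ((h M n)⁻¹ * h (M + 1) n) := by
        have : (h k n)⁻¹ * h (M + 1) n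
            = ((h k n)⁻¹ * h M n) * ((h M n)⁻¹ * h (M + 1) n) := by group
        rw [this]
        exact 𝒢.norm_mul n _ _
      have hSn : 𝒢.ν n ((h M n)⁻¹ * h (M + 1) n) ≤ 2⁻¹ ^ M * 2 := by
        have : 𝒢.ν n (((h M)⁻¹ * h (M + 1)) n) < 2⁻¹ ^ M * 2 := hnS
        exact le_of_lt (by
          rwa [show ((h M)⁻¹ * h (M + 1)) n = (h M n)⁻¹ * h (M + 1) n from rfl] at this)
      have harith : (2 : ℝ≥0∞)⁻¹ ^ (M + 1) * 4 = 2⁻¹ ^ M * 2 := by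
        rw [pow_succ, mul_assoc]
        congr 1
        rw [show (4 : ℝ≥0∞) = 2 * 2 by norm_num, ← mul_assoc,
          ENNReal.inv_mul_cancel (by norm_num) (by norm_num), one_mul]
      calc 𝒢.ν n ((h k n)⁻¹ * h (M + 1) n) + 2⁻¹ ^ (M + 1) * 4
          ≤ (𝒢.ν n ((h k n)⁻¹ * h M n) + 𝒢.ν n ((h M n)⁻¹ * h (M + 1) n)) + 2⁻¹ ^ M * 2 := by
            rw [harith]; exact add_le_add_left htri _
        _ ≤ (𝒢.ν n ((h k n)⁻¹ * h M n) + 2⁻¹ ^ M * 2) + 2⁻¹ ^ M * 2 := by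
            exact add_le_add_left (add_le_add_right hSn _) _
        _ = 𝒢.ν n ((h k n)⁻¹ * h M n) + 2⁻¹ ^ M * 4 := by
            rw [add_assoc]
            congr 1
            rw [← mul_add]
            norm_num
        _ ≤ 2⁻¹ ^ k * 4 := ih n hnM
  refine ⟨QuotientGroup.mk w, fun k => ?_⟩
  rw [← hh k,
    show ((QuotientGroup.mk (h k) : 𝒢.Q U)⁻¹ * QuotientGroup.mk w)
      = QuotientGroup.mk ((h k)⁻¹ * w) from rfl, qnorm_mk]
  refine pnorm_le_of_eventually 𝒢 U ?_
  refine Filter.mem_of_superset (hTU k) ?_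
  intro n hn
  have hkn : k ≤ n := hn.1
  have hmk : k ≤ m n := Nat.le_findGreatest (P := fun k => n ∈ T k) hkn hn
  have hnTm : n ∈ T (m n) := Nat.findGreatest_spec (P := fun k => n ∈ T k) hkn hn
  have := key k (m n) hmk n hnTm
  simp only [Set.mem_setOf_eq]
  calc 𝒢.ν n (((h k)⁻¹ * w) n) = 𝒢.ν n ((h k n)⁻¹ * h (m n) n) := rfl
    _ ≤ 𝒢.ν n ((h k n)⁻¹ * h (m n) n) + 2⁻¹ ^ (m n) * 4 := le_self_add
    _ ≤ 2⁻¹ ^ k * 4 := this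

end S7

namespace S7
open PMFamily

variable (𝒢 : PMFamily)

lemma baire {U : Ultrafilter ℕ} (hU : (U : Filter ℕ) ≤ Filter.cofinite)
    (g : ∀ n, 𝒢.G n)
    (cover : ∀ y : 𝒢.Q U, ∃ N, y ∈ CN N (QuotientGroup.mk g : 𝒢.Q U)) :
    ∃ (N : ℕ) (x : 𝒢.Q U) (ε : ℝ≥0∞), 0 < ε ∧
      ∀ y : 𝒢.Q U, 𝒢.qnorm U (x⁻¹ * y) < ε → y ∈ CN N (QuotientGroup.mk g : 𝒢.Q U) := by
  by_contra hcon
  push_neg at hcon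
  have step : ∀ (k : ℕ) (x : 𝒢.Q U) (ε : ℝ≥0∞), 0 < ε → ∃ (y : 𝒢.Q U) (δ : ℝ≥0∞),
      0 < δ ∧ δ ≤ ε / 2 ∧ δ ≤ 2⁻¹ ^ k ∧ 𝒢.qnorm U (x⁻¹ * y) < ε / 2 ∧
      ∀ z ∈ CN k (QuotientGroup.mk g : 𝒢.Q U), ¬ 𝒢.qnorm U (y⁻¹ * z) < 2 * δ := by
    intro k x ε hε
    have hε2 : (0 : ℝ≥0∞) < ε / 2 := ENNReal.half_pos hε.ne'
    obtain ⟨y, hy1, hy2⟩ := hcon k x (ε / 2) hε2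
    have hfar : ∃ δ₀ : ℝ≥0∞, 0 < δ₀ ∧
        ∀ z ∈ CN k (QuotientGroup.mk g : 𝒢.Q U), ¬ 𝒢.qnorm U (y⁻¹ * z) < δ₀ := by
      by_contra hfc
      push_neg at hfc
      refine hy2 (mem_CN_of_approx 𝒢 hU g k y ?_)
      intro δ hδ
      obtain ⟨z, hz, hzlt⟩ := hfc δ hδ
      exact ⟨z, hz, hzlt⟩
    obtain ⟨δ₀, hδ₀, hfar⟩ := hfar
    refine ⟨y, min (min (ε / 2) (2⁻¹ ^ k)) (δ₀ / 2), ?_, ?_, ?_, hy1, ?_⟩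
    · exact lt_min (lt_min hε2 (ENNReal.pow_pos (by norm_num) k)) (ENNReal.half_pos hδ₀.ne')
    · exact le_trans (min_le_left _ _) (min_le_left _ _)
    · exact le_trans (min_le_left _ _) (min_le_right _ _)
    · intro z hz hlt
      refine hfar z hz (lt_of_lt_of_le hlt ?_)
      calc 2 * min (min (ε / 2) (2⁻¹ ^ k)) (δ₀ / 2) ≤ 2 * (δ₀ / 2) :=
            mul_le_mul_right (min_le_right _ _) 2
        _ = δ₀ := by
            rw [mul_comm]
            exact ENNReal.div_mul_cancel (by norm_num) (by norm_num)
  choose Y D hD0 hD1 hD2 hQ hFar using step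
  let seq : ℕ → {p : 𝒢.Q U × ℝ≥0∞ // 0 < p.2} :=
    fun k => Nat.rec ⟨(1, 1), one_pos⟩
      (fun k p => ⟨(Y k p.1.1 p.1.2 p.2, D k p.1.1 p.1.2 p.2),
        hD0 k p.1.1 p.1.2 p.2⟩) k
  set x : ℕ → 𝒢.Q U := fun k => (seq k).1.1 with hx
  set ε : ℕ → ℝ≥0∞ := fun k => (seq k).1.2 with hεdef
  have hε0 : ∀ k, 0 < ε k := fun k => (seq k).2
  have hxs : ∀ k, x (k + 1) = Y k (x k) (ε k) (hε0 k) := fun k => rfl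
  have hεs : ∀ k, ε (k + 1) = D k (x k) (ε k) (hε0 k) := fun k => rfl
  have hP2 : ∀ k, ε (k + 1) ≤ ε k / 2 := fun k => by
    rw [hεs k]; exact hD1 k (x k) (ε k) (hε0 k)
  have hP3 : ∀ k, ε (k + 1) ≤ 2⁻¹ ^ k := fun k => by
    rw [hεs k]; exact hD2 k (x k) (ε k) (hε0 k)
  have hP4 : ∀ k, 𝒢.qnorm U ((x k)⁻¹ * x (k + 1)) < ε k / 2 := fun k => by
    rw [hxs k]; exact hQ k (x k) (ε k) (hε0 k)
  have hP5 : ∀ k, ∀ z ∈ CN k (QuotientGroup.mk g : 𝒢.Q U),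
      ¬ 𝒢.qnorm U ((x (k + 1))⁻¹ * z) < 2 * ε (k + 1) := fun k => by
    rw [hxs k, hεs k]; exact hFar k (x k) (ε k) (hε0 k)
  have hε1 : ε 0 = 1 := rfl
  -- chain bound
  have hchain : ∀ k M, k ≤ M → 𝒢.qnorm U ((x k)⁻¹ * x M) + ε M ≤ ε k := by
    intro k
    refine Nat.le_induction ?_ ?_
    · have : (x k)⁻¹ * x k = 1 := inv_mul_cancel (x k)
      rw [this, qnorm_one, zero_add]
    · intro M hkM ih
      have htri : 𝒢.qnorm U ((x k)⁻¹ * x (M + 1))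
          ≤ 𝒢.qnorm U ((x k)⁻¹ * x M) + 𝒢.qnorm U ((x M)⁻¹ * x (M + 1)) := by
        have : (x k)⁻¹ * x (M + 1) = ((x k)⁻¹ * x M) * ((x M)⁻¹ * x (M + 1)) := by group
        rw [this]
        exact qnorm_mul_le 𝒢 U _ _
      calc 𝒢.qnorm U ((x k)⁻¹ * x (M + 1)) + ε (M + 1)
          ≤ (𝒢.qnorm U ((x k)⁻¹ * x M) + 𝒢.qnorm U ((x M)⁻¹ * x (M + 1))) + ε M / 2 :=
            add_le_add htri (hP2 M)
        _ ≤ (𝒢.qnorm U ((x k)⁻¹ * x M) + ε M / 2) + ε M / 2 :=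
            add_le_add_left (add_le_add_right (hP4 M).le _) _
        _ = 𝒢.qnorm U ((x k)⁻¹ * x M) + ε M := by
            rw [add_assoc, ENNReal.add_halves]
        _ ≤ ε k := ih
  have hεtop : ∀ k, ε k ≠ ⊤ := by
    intro k
    cases k with
    | zero => rw [hε1]; exact one_ne_top
    | succ k => exact ne_top_of_le_ne_top (half_pow_ne_top k) (hP3 k)
  have hhalf : ∀ k, ε k / 2 ≤ 2⁻¹ ^ k := by
    intro k
    cases k with
    | zero =>
      rw [hε1, pow_zero]
      exact le_trans ENNReal.half_le_self le_rfl
    | succ k =>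
      calc ε (k + 1) / 2 ≤ 2⁻¹ ^ k / 2 := ENNReal.div_le_div_right (hP3 k) 2
        _ = 2⁻¹ ^ (k + 1) := by
            rw [pow_succ, div_eq_mul_inv]
  have hcauchy : ∀ k, 𝒢.qnorm U ((x k)⁻¹ * x (k + 1)) ≤ 2⁻¹ ^ k :=
    fun k => le_trans (hP4 k).le (hhalf k)
  obtain ⟨yinf, hyinf⟩ := complete 𝒢 hU x hcauchy
  have hball : ∀ k, 𝒢.qnorm U ((x k)⁻¹ * yinf) ≤ ε k := by
    intro k
    refine ENNReal.le_of_forall_pos_le_add fun γ hγ _ => ?_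
    have hγ' : ((γ : ℝ≥0∞) / 4) ≠ 0 := by
      simp only [Ne, ENNReal.div_eq_zero_iff]
      push_neg
      exact ⟨by exact_mod_cast hγ.ne', by norm_num⟩
    obtain ⟨m, hm⟩ := ENNReal.exists_inv_two_pow_lt hγ'
    set m' := max m k with hm'
    have hmm : (2 : ℝ≥0∞)⁻¹ ^ m' ≤ 2⁻¹ ^ m :=
      pow_le_pow_of_le_one zero_le (ENNReal.inv_le_one.2 one_le_two) (le_max_left m k)
    have h4 : (2 : ℝ≥0∞)⁻¹ ^ m' * 4 ≤ γ := by
      calc (2 : ℝ≥0∞)⁻¹ ^ m' * 4 ≤ 2⁻¹ ^ m * 4 := mul_le_mul_left hmm 4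
        _ ≤ (γ : ℝ≥0∞) / 4 * 4 := mul_le_mul_left hm.le 4
        _ = γ := ENNReal.div_mul_cancel (by norm_num) (by norm_num)
    have htri : 𝒢.qnorm U ((x k)⁻¹ * yinf)
        ≤ 𝒢.qnorm U ((x k)⁻¹ * x m') + 𝒢.qnorm U ((x m')⁻¹ * yinf) := by
      have : (x k)⁻¹ * yinf = ((x k)⁻¹ * x m') * ((x m')⁻¹ * yinf) := by group
      rw [this]
      exact qnorm_mul_le 𝒢 U _ _
    have h1 : 𝒢.qnorm U ((x k)⁻¹ * x m') ≤ ε k :=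
      le_trans le_self_add (hchain k m' (le_max_right m k))
    calc 𝒢.qnorm U ((x k)⁻¹ * yinf)
        ≤ ε k + 𝒢.qnorm U ((x m')⁻¹ * yinf) := le_trans htri (add_le_add_left h1 _)
      _ ≤ ε k + 2⁻¹ ^ m' * 4 := add_le_add_right (hyinf m') _
      _ ≤ ε k + γ := add_le_add_right h4 _
  obtain ⟨k, hk⟩ := cover yinf
  refine hP5 k yinf hk ?_
  refine lt_of_le_of_lt (hball (k + 1)) ?_
  rw [two_mul]
  exact ENNReal.lt_add_right (hεtop (k + 1)) (hε0 (k + 1)).ne'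

end S7

open S7 in
/-- simplicity versus bounded simplicity, bounded case. If the norms are
uniformly bounded, then the metric ultraproduct is simple (has no normal subgroups other than
`⊥` and `⊤`) if and only if it is boundedly simple: for every `g ≠ 1` there is `N` with
`C_N(g) = ` the whole group. -/
theorem statement7 (𝒢 : PMFamily)
    (hmetric : ∀ n (g : 𝒢.G n), 𝒢.ν n g = 0 ↔ g = 1)
    (U : Ultrafilter ℕ) (hU : (U : Filter ℕ) ≤ Filter.cofinite)
    (hbdd : ∃ C : ℝ≥0∞, C ≠ ⊤ ∧ ∀ n (g : 𝒢.G n), 𝒢.ν n g ≤ C) :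
    (∀ H : Subgroup (𝒢.Q U), H.Normal → H = ⊥ ∨ H = ⊤) ↔
      (∀ g : 𝒢.Q U, g ≠ 1 → ∃ N : ℕ, CN N g = Set.univ) := by
  classical
  constructor
  · -- simple → boundedly simple
    intro hsimple y hy1
    obtain ⟨g, rfl⟩ : ∃ g : ∀ n, 𝒢.G n, (QuotientGroup.mk g : 𝒢.Q U) = y :=
      ⟨Quotient.out y, mk_out 𝒢 U y⟩
    -- the normal closure of `y` is everything
    set K : Subgroup (𝒢.Q U) :=
      { carrier := {z | ∃ N, z ∈ CN N (QuotientGroup.mk g : 𝒢.Q U)}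
        one_mem' := ⟨0, CN_one 0 _⟩
        mul_mem' := by
          rintro a b ⟨N, hN⟩ ⟨M, hM⟩
          exact ⟨N + M, CN_mul hN hM⟩
        inv_mem' := by
          rintro a ⟨N, hN⟩
          exact ⟨N, CN_inv hN⟩ } with hKdef
    have hKnormal : K.Normal := by
      constructor
      rintro a ⟨N, hN⟩ c
      exact ⟨N, CN_conj hN c⟩
    have hcover : ∀ z : 𝒢.Q U, ∃ N, z ∈ CN N (QuotientGroup.mk g : 𝒢.Q U) := by
      rcases hsimple K hKnormal with hbot | htop
      · exfalso
        have hyK : (QuotientGroup.mk g : 𝒢.Q U) ∈ K := ⟨1, CN_self le_rfl _⟩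
        rw [hbot] at hyK
        exact hy1 (Subgroup.mem_bot.1 hyK)
      · intro z
        have : z ∈ K := htop ▸ Subgroup.mem_top z
        exact this
    by_contra hno
    push_neg at hno
    -- Baire: some CN contains a ball
    obtain ⟨N₀, x₀, ε₀, hε₀, hball₀⟩ := baire 𝒢 hU g hcover
    have hball1 : ∀ b : 𝒢.Q U, 𝒢.qnorm U b < ε₀ →
        b ∈ CN (N₀ + N₀) (QuotientGroup.mk g : 𝒢.Q U) := by
      intro b hb
      have hx₀ : x₀ ∈ CN N₀ (QuotientGroup.mk g : 𝒢.Q U) := by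
        refine hball₀ x₀ ?_
        rw [inv_mul_cancel, qnorm_one]
        exact hε₀
      have hx₀b : x₀ * b ∈ CN N₀ (QuotientGroup.mk g : 𝒢.Q U) := by
        refine hball₀ (x₀ * b) ?_
        rw [show x₀⁻¹ * (x₀ * b) = b by group]
        exact hb
      have : b = x₀⁻¹ * (x₀ * b) := by group
      rw [this]
      exact CN_mul (CN_inv hx₀) hx₀b
    set ε : ℝ≥0∞ := min ε₀ 1 with hεdef
    have hε : 0 < ε := lt_min hε₀ one_pos
    have hεtop : ε ≠ ⊤ := ne_top_of_le_ne_top one_ne_top (min_le_right _ _)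
    -- for each N pick an element far from CN N
    have hpick : ∀ N : ℕ, ∃ kN : ∀ n, 𝒢.G n,
        {n | ¬ finf 𝒢 g kN N n < ε / 2} ∈ U := by
      intro N
      obtain ⟨yN, hyN⟩ : ∃ yN : 𝒢.Q U,
          yN ∉ CN (N + (N₀ + N₀)) (QuotientGroup.mk g : 𝒢.Q U) := by
        by_contra hall
        push_neg at hall
        exact hno (N + (N₀ + N₀)) (Set.eq_univ_of_forall hall)
      obtain ⟨kN, hkN⟩ : ∃ kN : ∀ n, 𝒢.G n, (QuotientGroup.mk kN : 𝒢.Q U) = yN :=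
        ⟨Quotient.out yN, mk_out 𝒢 U yN⟩
      refine ⟨kN, notin_CN_dist 𝒢 hU g kN N hε hεtop ?_⟩
      intro z hz hlt
      have hb : (QuotientGroup.mk kN : 𝒢.Q U)⁻¹ * z
          ∈ CN (N₀ + N₀) (QuotientGroup.mk g : 𝒢.Q U) := by
        refine hball1 _ (lt_of_lt_of_le hlt (min_le_left _ _))
      have : yN ∈ CN (N + (N₀ + N₀)) (QuotientGroup.mk g : 𝒢.Q U) := by
        have heq : yN = z * ((QuotientGroup.mk kN : 𝒢.Q U)⁻¹ * z)⁻¹ := by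
          rw [← hkN]; group
        rw [heq]
        exact CN_mul hz (CN_inv hb)
      exact hyN this
    choose k hk using hpick
    -- diagonalisation
    set T : ℕ → Set ℕ := fun N => {n | N ≤ n} ∩
      ⋂ j ∈ Finset.range (N + 1), {n | ¬ finf 𝒢 g (k j) j n < ε / 2} with hTdef
    have hTU : ∀ N, T N ∈ U := by
      intro N
      refine Filter.inter_mem (tail_mem hU N) ?_
      exact (Filter.biInter_mem (Finset.range (N + 1)).finite_toSet).2 (fun j _ => hk j)
    set m : ℕ → ℕ := fun n => Nat.findGreatest (fun N => n ∈ T N) n with hmdef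
    set w : ∀ n, 𝒢.G n := fun n => k (m n) n with hwdef
    have hfinal : ∀ N, (QuotientGroup.mk w : 𝒢.Q U)
        ∉ CN N (QuotientGroup.mk g : 𝒢.Q U) := by
      intro N hmem
      obtain ⟨d, hd1, hd2⟩ := CN_transfer_down 𝒢 U hmem
      have hE : d⁻¹ * w ∈ 𝒢.E U := QuotientGroup.eq.1 hd1
      have hsmall : {n | 𝒢.ν n ((d⁻¹ * w) n) < ε / 2} ∈ U :=
        (𝒢.mem_E U).1 hE (ε / 2) (ENNReal.half_pos hε.ne')
      obtain ⟨n, hn1, hn2⟩ := Filter.nonempty_of_mem (Filter.inter_mem (hTU N) hsmall)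
      have hNn : N ≤ n := hn1.1
      have hmn : N ≤ m n := Nat.le_findGreatest (P := fun N => n ∈ T N) hNn hn1
      have hnTm : n ∈ T (m n) := Nat.findGreatest_spec (P := fun N => n ∈ T N) hNn hn1
      have hfar : ¬ finf 𝒢 g (k (m n)) (m n) n < ε / 2 := by
        have := hnTm.2
        simp only [Set.mem_iInter] at this
        exact this (m n) (Finset.mem_range.2 (Nat.lt_succ_self (m n)))
      refine hfar ?_
      have hdmem : d n ∈ CN (m n) (g n) := CN_mono hmn (g n) (hd2 n)
      calc finf 𝒢 g (k (m n)) (m n) n ≤ 𝒢.ν n ((d n)⁻¹ * k (m n) n) :=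
            finf_le 𝒢 hdmem
        _ = 𝒢.ν n ((d⁻¹ * w) n) := rfl
        _ < ε / 2 := hn2
    obtain ⟨N, hN⟩ := hcover (QuotientGroup.mk w)
    exact hfinal N hN
  · -- boundedly simple → simple
    intro hbs K hKnormal
    by_cases hbot : K = ⊥
    · exact Or.inl hbot
    · refine Or.inr ?_
      obtain ⟨a, ha⟩ := (Subgroup.ne_bot_iff_exists_ne_one).1 hbot
      have ha' : (a : 𝒢.Q U) ≠ 1 := by
        intro h
        exact ha (Subtype.ext (by simpa using h))
      obtain ⟨N, hN⟩ := hbs (a : 𝒢.Q U) ha'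
      haveI := hKnormal
      refine (Subgroup.eq_top_iff' K).2 ?_
      intro z
      have hz : z ∈ CN N (a : 𝒢.Q U) := hN ▸ Set.mem_univ z
      rcases mem_CN.1 hz with ⟨mm, _, hpow⟩
      exact Scl_pow_subset a.2 mm hpow
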